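/- In Lemma 'area' with f(t) = 1/(t+1) on (0,m], A = ∫₀^m dt/(t+1) = log(m+1), for every h ∈ (0,m] the overlap of [0,h]×[0,A/h] with the region under f is O(A · log log m / log m); i.e., the factor Θ(log log m / log m) in the rectangle-covering lemma is tight. -/
import Mathlib

lemma contOn_inv_add_one {a b : ℝ} (ha : 0 ≤ a) (hab : a ≤ b) :
    ContinuousOn (fun t : ℝ => 1 / (t + 1)) (Set.uIcc a b) := by
  apply ContinuousOn.div continuousOn_const (by fun_prop)
  intro x hx
  rw [Set.uIcc_of_le hab] at hx
  have := hx.1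
  nlinarith

lemma integral_inv_add_one {a b : ℝ} (ha : 0 ≤ a) (hab : a ≤ b) :
    ∫ t in a..b, 1 / (t + 1) = Real.log (b + 1) - Real.log (a + 1) := by
  rw [intervalIntegral.integral_eq_sub_of_hasDerivAt (f := fun t => Real.log (t + 1))]
  · intro x hx
    rw [Set.uIcc_of_le hab] at hx
    have hx1 : x + 1 ≠ 0 := by nlinarith [hx.1]
    simpa using ((hasDerivAt_id x).add_const 1).log hx1
  · exact (contOn_inv_add_one ha hab).intervalIntegrable

lemma intble_min {a b c : ℝ} (ha : 0 ≤ a) (hab : a ≤ b) :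
    IntervalIntegrable (fun t : ℝ => min (1 / (t + 1)) c) MeasureTheory.volume a b :=
  ((contOn_inv_add_one ha hab).inf continuousOn_const).intervalIntegrable

/-- Tightness of the rectangle-covering lemma: for f(t) = 1/(t+1) on (0,m] with
A = ∫₀^m f = log(m+1), every h ∈ (0,m] has rectangle overlap
∫₀^h min(f t, A/h) dt at most O(A·log log m / log m). -/
theorem stmt_16 :
    ∃ C > (0 : ℝ), ∀ m : ℕ, 3 ≤ m → ∀ A : ℝ, A = Real.log ((m : ℝ) + 1) →
      ∀ h ∈ Set.Ioc (0 : ℝ) (m : ℝ),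
        (∫ t in (0 : ℝ)..h, min (1 / (t + 1)) (A / h)) ≤
          C * A * Real.log (Real.log m) / Real.log m := by
  have h3 : (1 : ℝ) < Real.log 3 := by
    have he := Real.exp_one_lt_d9
    calc (1 : ℝ) = Real.log (Real.exp 1) := (Real.log_exp 1).symm
      _ < Real.log 3 := Real.log_lt_log (Real.exp_pos 1) (by linarith)
  have hc0 : 0 < Real.log (Real.log 3) := Real.log_pos h3
  refine ⟨(1 + Real.log 3) / Real.log (Real.log 3) + 1, by positivity, ?_⟩
  intro m hm A hA h hh
  obtain ⟨hh0, hhm⟩ := hh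
  have hm3 : (3 : ℝ) ≤ m := by exact_mod_cast hm
  have hlogm : Real.log 3 ≤ Real.log m := Real.log_le_log (by norm_num) hm3
  have hlogm1 : 1 < Real.log m := lt_of_lt_of_le h3 hlogm
  have hA1 : Real.log m ≤ A := by
    rw [hA]; exact Real.log_le_log (by linarith) (by linarith)
  have hApos : 1 < A := lt_of_lt_of_le hlogm1 hA1
  -- key: integral ≤ 1 + log (A+1)
  have key : (∫ t in (0 : ℝ)..h, min (1 / (t + 1)) (A / h)) ≤ 1 + Real.log (A + 1) := by
    rcases le_or_gt h A with hle | hlt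
    · -- h ≤ A : bound by ∫ f = log(h+1) ≤ log(A+1)
      have h1 : (∫ t in (0 : ℝ)..h, min (1 / (t + 1)) (A / h)) ≤ ∫ t in (0 : ℝ)..h, 1 / (t + 1) := by
        apply intervalIntegral.integral_mono_on hh0.le (intble_min le_rfl hh0.le)
          ((contOn_inv_add_one le_rfl hh0.le).intervalIntegrable)
        intro x hx; exact min_le_left _ _
      have h2 : (∫ t in (0 : ℝ)..h, 1 / (t + 1)) = Real.log (h + 1) := by
        rw [integral_inv_add_one le_rfl hh0.le]; simp
      have h4 : Real.log (h + 1) ≤ Real.log (A + 1) := Real.log_le_log (by linarith) (by linarith)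
      linarith
    · -- A < h : split at s = h/A
      set s := h / A with hs
      have hs0 : 0 < s := by positivity
      have hs1 : 1 < s := (one_lt_div (by linarith)).2 hlt
      have hsh : s < h := by
        rw [hs, div_lt_iff₀ (by linarith)]; nlinarith
      have hsplit : (∫ t in (0 : ℝ)..h, min (1 / (t + 1)) (A / h))
          = (∫ t in (0 : ℝ)..s, min (1 / (t + 1)) (A / h))
            + ∫ t in s..h, min (1 / (t + 1)) (A / h) := by
        rw [intervalIntegral.integral_add_adjacent_intervals (intble_min le_rfl hs0.le)
          (intble_min hs0.le hsh.le)]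
      have hb1 : (∫ t in (0 : ℝ)..s, min (1 / (t + 1)) (A / h)) ≤ 1 := by
        have h1 : (∫ t in (0 : ℝ)..s, min (1 / (t + 1)) (A / h))
            ≤ ∫ _t in (0 : ℝ)..s, A / h := by
          apply intervalIntegral.integral_mono_on hs0.le (intble_min le_rfl hs0.le)
            intervalIntegrable_const
          intro x hx; exact min_le_right _ _
        have hc : (∫ _t in (0 : ℝ)..s, A / h) = 1 := by
          rw [intervalIntegral.integral_const, smul_eq_mul, sub_zero, hs]
          field_simp
        linarith
      have hb2 : (∫ t in s..h, min (1 / (t + 1)) (A / h)) ≤ Real.log (A + 1) := by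
        have h1 : (∫ t in s..h, min (1 / (t + 1)) (A / h)) ≤ ∫ t in s..h, 1 / (t + 1) := by
          apply intervalIntegral.integral_mono_on hsh.le (intble_min hs0.le hsh.le)
            ((contOn_inv_add_one hs0.le hsh.le).intervalIntegrable)
          intro x hx; exact min_le_left _ _
        have h2 : (∫ t in s..h, 1 / (t + 1)) = Real.log (h + 1) - Real.log (s + 1) :=
          integral_inv_add_one hs0.le hsh.le
        have h5 : Real.log (h + 1) ≤ Real.log (A + 1) + Real.log (s + 1) := by
          rw [← Real.log_mul (by positivity) (by positivity)]
          apply Real.log_le_log (by linarith)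
          have hAs : A * s = h := by rw [hs]; field_simp
          nlinarith
        linarith
      linarith
  -- final comparison
  have hL : Real.log (Real.log 3) ≤ Real.log (Real.log m) := Real.log_le_log (by linarith) hlogm
  have hLpos : 0 < Real.log (Real.log m) := lt_of_lt_of_le hc0 hL
  have hAle : A + 1 ≤ 3 * Real.log m := by
    have hA2 : A ≤ 2 * Real.log m := by
      rw [hA]
      have h6 : Real.log ((m : ℝ) + 1) ≤ Real.log (2 * m) :=
        Real.log_le_log (by linarith) (by linarith)
      rw [Real.log_mul (by norm_num) (by linarith)] at h6
      have hl2 : Real.log 2 ≤ Real.log 3 := Real.log_le_log (by norm_num) (by norm_num)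
      linarith
    linarith
  have hlogA : Real.log (A + 1) ≤ Real.log 3 + Real.log (Real.log m) := by
    calc Real.log (A + 1) ≤ Real.log (3 * Real.log m) :=
          Real.log_le_log (by linarith) hAle
      _ = Real.log 3 + Real.log (Real.log m) := Real.log_mul (by norm_num) (by linarith)
  have h13 : 1 + Real.log 3
      ≤ (1 + Real.log 3) / Real.log (Real.log 3) * Real.log (Real.log m) := by
    rw [div_mul_eq_mul_div, le_div_iff₀ hc0]
    exact mul_le_mul_of_nonneg_left hL (by linarith)
  have step1 : 1 + Real.log (A + 1)
      ≤ ((1 + Real.log 3) / Real.log (Real.log 3) + 1) * Real.log (Real.log m) := by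
    have hexp : ((1 + Real.log 3) / Real.log (Real.log 3) + 1) * Real.log (Real.log m)
        = (1 + Real.log 3) / Real.log (Real.log 3) * Real.log (Real.log m)
          + Real.log (Real.log m) := by ring
    linarith
  have step2 : ((1 + Real.log 3) / Real.log (Real.log 3) + 1) * Real.log (Real.log m)
      ≤ ((1 + Real.log 3) / Real.log (Real.log 3) + 1) * A * Real.log (Real.log m)
        / Real.log m := by
    rw [le_div_iff₀ (by linarith : (0:ℝ) < Real.log m)]
    have hKL : (0:ℝ) ≤ ((1 + Real.log 3) / Real.log (Real.log 3) + 1) * Real.log (Real.log m) :=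
      by positivity
    have h7 := mul_le_mul_of_nonneg_left hA1 hKL
    nlinarith [h7]
  linarith
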